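/- Let 1 ≤ k ≤ n and 1 ≤ l ≤ m be natural numbers with k ≤ l and m - l ≤ n - k. Then the ratio H_{k|n}(p)/H_{l|m}(p) is decreasing in p ∈ (0,1), where H_{k|n}(p) = p h'_{k|n}(p)/h_{k|n}(p) with h_{k|n}(p) = (1/B(k,n-k+1)) ∫₀^p u^{k-1}(1-u)^{n-k} du. -/

import Mathlib

open intervalIntegral Set

noncomputable def wfun (p s x : ℝ) : ℝ := (1 - x*p)/s
noncomputable def auxG (c a : ℕ) (p s : ℝ) : ℝ := ∫ x in (0:ℝ)..1, x^c * wfun p s x ^ a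
noncomputable def auxA (c a : ℕ) (p s : ℝ) : ℝ := ∫ x in (0:ℝ)..1, x^c * wfun p s x ^ a * (1-x)

lemma wfun_cont (p s : ℝ) : Continuous (wfun p s) := by
  unfold wfun; fun_prop

lemma cont1 (c a : ℕ) : Continuous fun u : ℝ => u^c*(1-u)^a := by fun_prop

lemma cont2 (c a : ℕ) (p s : ℝ) : Continuous fun x : ℝ => x^c * wfun p s x ^ a := by
  have := wfun_cont p s; fun_prop

lemma cont3 (c a : ℕ) (p s : ℝ) : Continuous fun x : ℝ => x^c * wfun p s x ^ a * (1-x) := by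
  have := wfun_cont p s; fun_prop

lemma F_pos (c a : ℕ) {p : ℝ} (hp : 0 < p) (hp1 : p ≤ 1) :
    0 < ∫ u in (0:ℝ)..p, u^c*(1-u)^a := by
  apply intervalIntegral_pos_of_pos_on ((cont1 c a).intervalIntegrable 0 p) _ hp
  intro x hx
  have h1 : 0 < x := hx.1
  have h2 : x < 1 := lt_of_lt_of_le hx.2 hp1
  have : (0:ℝ) < 1 - x := by linarith
  positivity

lemma F_deriv (c a : ℕ) (p : ℝ) :
    HasDerivAt (fun q => ∫ u in (0:ℝ)..q, u^c*(1-u)^a) (p^c*(1-p)^a) p :=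
  integral_hasDerivAt_right ((cont1 c a).intervalIntegrable 0 p)
    ((cont1 c a).stronglyMeasurableAtFilter _ _) (cont1 c a).continuousAt

lemma wfun_ge_one {p s x : ℝ} (hp : 0 < p) (hs : 0 < s) (hps : p + s = 1)
    (hx : x ∈ Icc (0:ℝ) 1) : 1 ≤ wfun p s x := by
  rw [wfun, le_div_iff₀ hs, one_mul]
  nlinarith [hx.1, hx.2]

lemma auxG_pos (c a : ℕ) {p s : ℝ} (hp : 0 < p) (hs : 0 < s) (hps : p + s = 1) :
    0 < auxG c a p s := by
  apply intervalIntegral_pos_of_pos_on ((cont2 c a p s).intervalIntegrable 0 1) _ one_pos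
  intro x hx
  have hw : 1 ≤ wfun p s x := wfun_ge_one hp hs hps ⟨hx.1.le, hx.2.le⟩
  have : (0:ℝ) < x := hx.1
  positivity

lemma auxG_nonneg (c a : ℕ) {p s : ℝ} (hp : 0 < p) (hs : 0 < s) (hps : p + s = 1) :
    0 ≤ auxG c a p s := (auxG_pos c a hp hs hps).le

lemma auxA_nonneg (c a : ℕ) {p s : ℝ} (hp : 0 < p) (hs : 0 < s) (hps : p + s = 1) :
    0 ≤ auxA c a p s := by
  apply intervalIntegral.integral_nonneg zero_le_one
  intro x hx
  have hw : 1 ≤ wfun p s x := wfun_ge_one hp hs hps hx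
  have h1 := hx.1; have h2 := hx.2
  have : (0:ℝ) ≤ 1 - x := by linarith
  positivity

lemma F_eq_G (c a : ℕ) {p : ℝ} (hp : 0 < p) (hp1 : p < 1) :
    (∫ u in (0:ℝ)..p, u^c*(1-u)^a) = p^(c+1)*(1-p)^a * auxG c a p (1-p) := by
  have hs : (0:ℝ) < 1 - p := by linarith
  have h1 := integral_comp_mul_left (a := (0:ℝ)) (b := 1)
    (fun u : ℝ => u^c*(1-u)^a) (ne_of_gt hp)
  simp only [mul_zero, mul_one, smul_eq_mul] at h1
  have h2 : (∫ x in (0:ℝ)..1, (fun u => u^c*(1-u)^a) (p*x))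
      = p^c * ∫ x in (0:ℝ)..1, x^c*(1-x*p)^a := by
    rw [← integral_const_mul]
    apply integral_congr
    intro x _
    simp only
    ring
  have h3 : auxG c a p (1-p) = ((1-p)^a)⁻¹ * ∫ x in (0:ℝ)..1, x^c*(1-x*p)^a := by
    rw [auxG, ← integral_const_mul]
    apply integral_congr
    intro x _
    simp only [wfun, div_pow]
    ring
  have hne : ((1-p)^a : ℝ) ≠ 0 := by positivity
  rw [h3]
  rw [h2] at h1
  have hp0 : p ≠ 0 := ne_of_gt hp
  have e : (∫ u in (0:ℝ)..p, u^c*(1-u)^a) = p * (p^c * ∫ x in (0:ℝ)..1, x^c*(1-x*p)^a) := by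
    rw [h1, mul_inv_cancel_left₀ hp0]
  rw [mul_assoc (p^(c+1)), mul_inv_cancel_left₀ hne, e, pow_succ]
  ring

lemma wfun_deriv {p s : ℝ} (hs : s ≠ 0) (x : ℝ) :
    HasDerivAt (wfun p s) (-p/s) x := by
  have h : HasDerivAt (fun x : ℝ => (1 - x*p)/s) ((-p)/s) x := by
    have h1 : HasDerivAt (fun x : ℝ => 1 - x*p) (-p) x := by
      simpa using ((hasDerivAt_id x).mul_const p).const_sub 1
    exact h1.div_const s
  exact h

lemma G_ibp (c a : ℕ) {p s : ℝ} (hp : 0 < p) (hs : 0 < s) (hps : p + s = 1) :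
    ((c:ℝ)+1) * auxG c a p s - (a:ℝ)*p/s * auxG (c+1) (a-1) p s = 1 := by
  have hsne : s ≠ 0 := ne_of_gt hs
  have hderiv : ∀ x ∈ uIcc (0:ℝ) 1,
      HasDerivAt (fun x => x^(c+1) * wfun p s x ^ a)
        (((c:ℝ)+1) * (x^c * wfun p s x ^ a) - (a:ℝ)*p/s * (x^(c+1) * wfun p s x ^ (a-1))) x := by
    intro x _
    have h1 : HasDerivAt (fun x : ℝ => x^(c+1)) (((c:ℝ)+1) * x^c) x := by
      simpa using hasDerivAt_pow (c+1) x
    have h2 : HasDerivAt (fun x => wfun p s x ^ a) ((a:ℝ) * wfun p s x ^ (a-1) * (-p/s)) x :=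
      (wfun_deriv hsne x).pow a
    have := h1.mul h2
    exact this.congr_deriv (by ring)
  have hint : IntervalIntegrable
      (fun x => ((c:ℝ)+1) * (x^c * wfun p s x ^ a) - (a:ℝ)*p/s * (x^(c+1) * wfun p s x ^ (a-1)))
      MeasureTheory.volume 0 1 := by
    apply Continuous.intervalIntegrable
    have := wfun_cont p s; fun_prop
  have heq := integral_eq_sub_of_hasDerivAt hderiv hint
  have hw1 : wfun p s 1 = 1 := by
    rw [wfun]; field_simp; linarith
  rw [intervalIntegral.integral_sub (by apply Continuous.intervalIntegrable; have := wfun_cont p s; fun_prop)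
      (by apply Continuous.intervalIntegrable; have := wfun_cont p s; fun_prop),
    integral_const_mul, integral_const_mul] at heq
  rw [hw1] at heq
  simp only [one_pow, mul_one, zero_pow (Nat.succ_ne_zero c), zero_mul, sub_zero] at heq
  rw [auxG, auxG]
  convert heq using 2

lemma G_id (c a : ℕ) {p s : ℝ} (hs : 0 < s) (hps : p + s = 1) :
    (a:ℝ) * auxA c (a-1) p s = (a:ℝ)*s*(auxG c a p s - auxG (c+1) (a-1) p s) := by
  rcases a with _ | a'
  · simp
  · have hsne : s ≠ 0 := ne_of_gt hs
    have key : auxA c (a'+1-1) p s = s * auxG c (a'+1) p s - s * auxG (c+1) (a'+1-1) p s := by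
      simp only [Nat.add_sub_cancel]
      rw [auxA, auxG, auxG, ← integral_const_mul, ← integral_const_mul,
        ← intervalIntegral.integral_sub
          (by apply Continuous.intervalIntegrable; have := wfun_cont p s; fun_prop)
          (by apply Continuous.intervalIntegrable; have := wfun_cont p s; fun_prop)]
      apply integral_congr
      intro x _
      have hw : s * wfun p s x = 1 - x*p := by rw [wfun]; field_simp
      have : x^c * wfun p s x ^ (a'+1) = x^c * wfun p s x ^ a' * wfun p s x := by ring
      calc x^c * wfun p s x ^ a' * (1-x)
          = x^c * wfun p s x ^ a' * ((1-x*p) - x*s) := by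
            linear_combination (x^c * wfun p s x ^ a' * x) * hps
        _ = x^c * wfun p s x ^ a' * (s * wfun p s x) - s * (x^(c+1) * wfun p s x ^ a') := by
            rw [hw]; ring
        _ = s * (x^c * wfun p s x ^ (a'+1)) - s * (x^(c+1) * wfun p s x ^ a') := by ring
    rw [key]; ring

lemma wfun_anti {p s x y : ℝ} (hs : 0 < s) (hxy : x ≤ y) (hp : 0 ≤ p) :
    wfun p s y ≤ wfun p s x := by
  rw [wfun, wfun]
  apply div_le_div_of_nonneg_right ?_ hs.le
  nlinarith

-- kernel nonnegativity
lemma kernel_nonneg (κ c b' d : ℕ) {p s x y : ℝ} (hp : 0 < p) (hs : 0 < s) (hps : p + s = 1)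
    (hx : x ∈ Icc (0:ℝ) 1) (hy : y ∈ Icc (0:ℝ) 1) :
    0 ≤ x^κ * wfun p s x ^ (b'+d) * (1-x) * (y^(κ+c) * wfun p s y ^ (b'+1))
      + y^κ * wfun p s y ^ (b'+d) * (1-y) * (x^(κ+c) * wfun p s x ^ (b'+1))
      - x^(κ+c) * wfun p s x ^ b' * (1-x) * (y^κ * wfun p s y ^ (b'+1+d))
      - y^(κ+c) * wfun p s y ^ b' * (1-y) * (x^κ * wfun p s x ^ (b'+1+d)) := by
  set u := wfun p s x with hu
  set v := wfun p s y with hv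
  have hu1 : 1 ≤ u := wfun_ge_one hp hs hps hx
  have hv1 : 1 ≤ v := wfun_ge_one hp hs hps hy
  have hu0 : 0 ≤ u := by linarith
  have hv0 : 0 ≤ v := by linarith
  have hsne : s ≠ 0 := ne_of_gt hs
  have huv : (1-x)*v - (1-y)*u = y - x := by
    rw [hu, hv, wfun, wfun]
    field_simp
    linear_combination (x - y) * hps
  have hfact : x^κ * u ^ (b'+d) * (1-x) * (y^(κ+c) * v ^ (b'+1))
      + y^κ * v ^ (b'+d) * (1-y) * (x^(κ+c) * u ^ (b'+1))
      - x^(κ+c) * u ^ b' * (1-x) * (y^κ * v ^ (b'+1+d))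
      - y^(κ+c) * v ^ b' * (1-y) * (x^κ * u ^ (b'+1+d))
      = x^κ * y^κ * u^b' * v^b' * ((u^d * y^c - v^d * x^c) * (y - x)) := by
    linear_combination (x^κ * y^κ * u^b' * v^b' * (u^d * y^c - v^d * x^c)) * huv
  rw [hfact]
  have hxy : 0 ≤ (u^d * y^c - v^d * x^c) * (y - x) := by
    rcases le_total x y with h | h
    · have huv2 : v ≤ u := wfun_anti hs h hp.le
      have h1 : v^d ≤ u^d := pow_le_pow_left₀ hv0 huv2 d
      have h2 : x^c ≤ y^c := pow_le_pow_left₀ hx.1 h c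
      have h3 : v^d * x^c ≤ u^d * y^c :=
        mul_le_mul h1 h2 (pow_nonneg hx.1 c) (pow_nonneg hu0 d)
      exact mul_nonneg (by linarith) (by linarith)
    · have huv2 : u ≤ v := wfun_anti hs h hp.le
      have h1 : u^d ≤ v^d := pow_le_pow_left₀ hu0 huv2 d
      have h2 : y^c ≤ x^c := pow_le_pow_left₀ hy.1 h c
      have h3 : u^d * y^c ≤ v^d * x^c :=
        mul_le_mul h1 h2 (pow_nonneg hy.1 c) (pow_nonneg hv0 d)
      nlinarith
  have h1 : (0:ℝ) ≤ x^κ := pow_nonneg hx.1 κ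
  have h2 : (0:ℝ) ≤ y^κ := pow_nonneg hy.1 κ
  positivity

lemma aux_fkg (κ c b' d : ℕ) {p s : ℝ} (hp : 0 < p) (hs : 0 < s) (hps : p + s = 1) :
    auxA (κ+c) b' p s * auxG κ (b'+1+d) p s ≤ auxA κ (b'+d) p s * auxG (κ+c) (b'+1) p s := by
  have hwc := wfun_cont p s
  have c1 : Continuous fun x : ℝ => x^κ * wfun p s x ^ (b'+d) * (1-x) := by fun_prop
  have c2 : Continuous fun y : ℝ => y^(κ+c) * wfun p s y ^ (b'+1) := by fun_prop
  have c3 : Continuous fun x : ℝ => x^(κ+c) * wfun p s x ^ b' * (1-x) := by fun_prop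
  have c4 : Continuous fun y : ℝ => y^κ * wfun p s y ^ (b'+1+d) := by fun_prop
  have inner : ∀ x : ℝ,
      (∫ y in (0:ℝ)..1,
        x^κ * wfun p s x ^ (b'+d) * (1-x) * (y^(κ+c) * wfun p s y ^ (b'+1))
        + y^κ * wfun p s y ^ (b'+d) * (1-y) * (x^(κ+c) * wfun p s x ^ (b'+1))
        - x^(κ+c) * wfun p s x ^ b' * (1-x) * (y^κ * wfun p s y ^ (b'+1+d))
        - y^(κ+c) * wfun p s y ^ b' * (1-y) * (x^κ * wfun p s x ^ (b'+1+d)))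
      = x^κ * wfun p s x ^ (b'+d) * (1-x) * auxG (κ+c) (b'+1) p s
        + auxA κ (b'+d) p s * (x^(κ+c) * wfun p s x ^ (b'+1))
        - x^(κ+c) * wfun p s x ^ b' * (1-x) * auxG κ (b'+1+d) p s
        - auxA (κ+c) b' p s * (x^κ * wfun p s x ^ (b'+1+d)) := by
    intro x
    rw [intervalIntegral.integral_sub (by apply Continuous.intervalIntegrable; fun_prop)
          (by apply Continuous.intervalIntegrable; fun_prop),
        intervalIntegral.integral_sub (by apply Continuous.intervalIntegrable; fun_prop)
          (by apply Continuous.intervalIntegrable; fun_prop),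
        intervalIntegral.integral_add (by apply Continuous.intervalIntegrable; fun_prop)
          (by apply Continuous.intervalIntegrable; fun_prop),
        integral_const_mul, integral_mul_const, integral_const_mul, integral_mul_const]
    rfl
  have houter :
      (∫ x in (0:ℝ)..1, (∫ y in (0:ℝ)..1,
        x^κ * wfun p s x ^ (b'+d) * (1-x) * (y^(κ+c) * wfun p s y ^ (b'+1))
        + y^κ * wfun p s y ^ (b'+d) * (1-y) * (x^(κ+c) * wfun p s x ^ (b'+1))
        - x^(κ+c) * wfun p s x ^ b' * (1-x) * (y^κ * wfun p s y ^ (b'+1+d))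
        - y^(κ+c) * wfun p s y ^ b' * (1-y) * (x^κ * wfun p s x ^ (b'+1+d))))
      = 2 * (auxA κ (b'+d) p s * auxG (κ+c) (b'+1) p s)
        - 2 * (auxA (κ+c) b' p s * auxG κ (b'+1+d) p s) := by
    rw [intervalIntegral.integral_congr (g :=
      fun x => x^κ * wfun p s x ^ (b'+d) * (1-x) * auxG (κ+c) (b'+1) p s
        + auxA κ (b'+d) p s * (x^(κ+c) * wfun p s x ^ (b'+1))
        - x^(κ+c) * wfun p s x ^ b' * (1-x) * auxG κ (b'+1+d) p s
        - auxA (κ+c) b' p s * (x^κ * wfun p s x ^ (b'+1+d)))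
      (fun x _ => inner x)]
    rw [intervalIntegral.integral_sub (by apply Continuous.intervalIntegrable; fun_prop)
          (by apply Continuous.intervalIntegrable; fun_prop),
        intervalIntegral.integral_sub (by apply Continuous.intervalIntegrable; fun_prop)
          (by apply Continuous.intervalIntegrable; fun_prop),
        intervalIntegral.integral_add (by apply Continuous.intervalIntegrable; fun_prop)
          (by apply Continuous.intervalIntegrable; fun_prop),
        integral_mul_const, integral_const_mul, integral_mul_const, integral_const_mul]
    unfold auxA auxG
    ring
  have hnn : 0 ≤ (∫ x in (0:ℝ)..1, (∫ y in (0:ℝ)..1,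
        x^κ * wfun p s x ^ (b'+d) * (1-x) * (y^(κ+c) * wfun p s y ^ (b'+1))
        + y^κ * wfun p s y ^ (b'+d) * (1-y) * (x^(κ+c) * wfun p s x ^ (b'+1))
        - x^(κ+c) * wfun p s x ^ b' * (1-x) * (y^κ * wfun p s y ^ (b'+1+d))
        - y^(κ+c) * wfun p s y ^ b' * (1-y) * (x^κ * wfun p s x ^ (b'+1+d)))) := by
    apply intervalIntegral.integral_nonneg zero_le_one
    intro x hx
    apply intervalIntegral.integral_nonneg zero_le_one
    intro y hy
    exact kernel_nonneg κ c b' d hp hs hps hx hy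
  rw [houter] at hnn
  linarith

lemma aux_key (κ lam a b : ℕ) (hkl : κ ≤ lam) (hba : b ≤ a) {p s : ℝ}
    (hp : 0 < p) (hs : 0 < s) (hps : p + s = 1) :
    s * (auxG κ a p s - auxG lam b p s)
      ≤ auxG κ a p s * auxG lam b p s * (((lam:ℝ)-(κ:ℝ))*s + ((a:ℝ)-(b:ℝ))*p) := by
  set Gk := auxG κ a p s with hGk
  set Gl := auxG lam b p s with hGl
  set Hk := auxG (κ+1) (a-1) p s with hHk
  set Hl := auxG (lam+1) (b-1) p s with hHl
  set Ak := auxA κ (a-1) p s with hAk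
  set Al := auxA lam (b-1) p s with hAl
  have hsne : s ≠ 0 := ne_of_gt hs
  have hGk0 : 0 < Gk := auxG_pos κ a hp hs hps
  have hGl0 : 0 < Gl := auxG_pos lam b hp hs hps
  have hAk0 : 0 ≤ Ak := auxA_nonneg κ (a-1) hp hs hps
  have hAl0 : 0 ≤ Al := auxA_nonneg lam (b-1) hp hs hps
  have ibpk := G_ibp κ a hp hs hps
  have ibpl := G_ibp lam b hp hs hps
  have idk := G_id κ a hs hps
  have idl := G_id lam b hs hps
  rw [← hGk, ← hHk] at ibpk
  rw [← hAk, ← hGk, ← hHk] at idk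
  rw [← hGl, ← hHl] at ibpl
  rw [← hAl, ← hGl, ← hHl] at idl
  have ek : (a:ℝ)*p*Hk = s*(((κ:ℝ)+1)*Gk - 1) := by
    have h2 : ((κ:ℝ)+1)*Gk - 1 = (a:ℝ)*p/s*Hk := by linarith [ibpk]
    rw [h2]; field_simp
  have el : (b:ℝ)*p*Hl = s*(((lam:ℝ)+1)*Gl - 1) := by
    have h2 : ((lam:ℝ)+1)*Gl - 1 = (b:ℝ)*p/s*Hl := by linarith [ibpl]
    rw [h2]; field_simp
  have epk : p*((a:ℝ)*Ak) = p*(a:ℝ)*s*Gk - s*(s*(((κ:ℝ)+1)*Gk - 1)) := by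
    linear_combination p*idk - s*ek
  have epl : p*((b:ℝ)*Al) = p*(b:ℝ)*s*Gl - s*(s*(((lam:ℝ)+1)*Gl - 1)) := by
    linear_combination p*idl - s*el
  have hfkg : (b:ℝ)*(Al*Gk) ≤ (a:ℝ)*(Ak*Gl) := by
    rcases Nat.eq_zero_or_pos b with hb | hb
    · subst hb
      simp only [Nat.cast_zero, zero_mul]
      positivity
    · have h := aux_fkg κ (lam-κ) (b-1) (a-b) hp hs hps
      rw [show κ+(lam-κ) = lam by omega, show b-1+1+(a-b) = a by omega,
        show b-1+(a-b) = a-1 by omega, show b-1+1 = b by omega] at h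
      rw [← hGk, ← hGl, ← hAk, ← hAl] at h
      calc (b:ℝ)*(Al*Gk) ≤ (b:ℝ)*(Ak*Gl) := by
            apply mul_le_mul_of_nonneg_left h (Nat.cast_nonneg b)
        _ ≤ (a:ℝ)*(Ak*Gl) := by
            apply mul_le_mul_of_nonneg_right (Nat.cast_le.mpr hba)
            positivity
  have hscale : p*((b:ℝ)*(Al*Gk)) ≤ p*((a:ℝ)*(Ak*Gl)) :=
    mul_le_mul_of_nonneg_left hfkg hp.le
  have h1 : (p*((a:ℝ)*Ak))*Gl = (p*(a:ℝ)*s*Gk - s*(s*(((κ:ℝ)+1)*Gk - 1)))*Gl := by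
    rw [epk]
  have h2 : (p*((b:ℝ)*Al))*Gk = (p*(b:ℝ)*s*Gl - s*(s*(((lam:ℝ)+1)*Gl - 1)))*Gk := by
    rw [epl]
  have hh : (p*(b:ℝ)*s*Gl - s*(s*(((lam:ℝ)+1)*Gl - 1)))*Gk
      ≤ (p*(a:ℝ)*s*Gk - s*(s*(((κ:ℝ)+1)*Gk - 1)))*Gl := by
    linarith [hscale, h1, h2]
  have hfin : s*(s*(Gk - Gl)) ≤ s*(Gk*Gl*(((lam:ℝ)-(κ:ℝ))*s + ((a:ℝ)-(b:ℝ))*p)) := by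
    linarith [hh]
  exact le_of_mul_le_mul_left hfin hs

lemma pow_pred_mul (j : ℕ) (x : ℝ) : (j:ℝ)*x^(j-1)*x = (j:ℝ)*x^j := by
  rcases j with _ | j
  · simp
  · simp only [Nat.add_sub_cancel, Nat.cast_add, Nat.cast_one]
    ring

lemma num_nonpos (κ lam a b : ℕ) (hkl : κ ≤ lam) (hba : b ≤ a) {p s FK FL : ℝ}
    (hp : 0 < p) (hs : 0 < s) (hps : p + s = 1)
    (hFK : FK = p^(κ+1)*s^a * auxG κ a p s)
    (hFL : FL = p^(lam+1)*s^b * auxG lam b p s) :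
    ((↑κ*p^(κ-1)*s^a + p^κ*(↑a*s^(a-1)*(-1))) * FL + p^κ*s^a*(p^lam*s^b)) * (p^lam*s^b*FK)
      - (p^κ*s^a*FL) * ((↑lam*p^(lam-1)*s^b + p^lam*(↑b*s^(b-1)*(-1))) * FK
          + p^lam*s^b*(p^κ*s^a)) ≤ 0 := by
  subst hFK hFL
  set Gk := auxG κ a p s with hGk
  set Gl := auxG lam b p s with hGl
  have key := aux_key κ lam a b hkl hba hp hs hps
  rw [← hGk, ← hGl] at key
  have e1 : (κ:ℝ)*p^(κ-1)*p = (κ:ℝ)*p^κ := pow_pred_mul κ p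
  have e2 : (a:ℝ)*s^(a-1)*s = (a:ℝ)*s^a := pow_pred_mul a s
  have e3 : (lam:ℝ)*p^(lam-1)*p = (lam:ℝ)*p^lam := pow_pred_mul lam p
  have e4 : (b:ℝ)*s^(b-1)*s = (b:ℝ)*s^b := pow_pred_mul b s
  have hbig : p*s*(((↑κ*p^(κ-1)*s^a + p^κ*(↑a*s^(a-1)*(-1))) * (p^(lam+1)*s^b*Gl)
        + p^κ*s^a*(p^lam*s^b)) * (p^lam*s^b*(p^(κ+1)*s^a*Gk))
      - (p^κ*s^a*(p^(lam+1)*s^b*Gl)) * ((↑lam*p^(lam-1)*s^b + p^lam*(↑b*s^(b-1)*(-1)))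
          * (p^(κ+1)*s^a*Gk) + p^lam*s^b*(p^κ*s^a)))
      = p^(2*κ+2*lam+2)*s^(2*a+2*b)
        * (s*(Gk - Gl) - Gk*Gl*(((lam:ℝ)-(κ:ℝ))*s + ((a:ℝ)-(b:ℝ))*p)) := by
    linear_combination (s^(a+1)*((p^(lam+1)*s^b*Gl)*(p^lam*s^b)*(p^(κ+1)*s^a*Gk)))*e1
      - (p^(κ+1)*((p^(lam+1)*s^b*Gl)*(p^lam*s^b)*(p^(κ+1)*s^a*Gk)))*e2
      - (s^(b+1)*((p^κ*s^a)*(p^(lam+1)*s^b*Gl)*(p^(κ+1)*s^a*Gk)))*e3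
      + (p^(lam+1)*((p^κ*s^a)*(p^(lam+1)*s^b*Gl)*(p^(κ+1)*s^a*Gk)))*e4
  have hbr : s*(Gk - Gl) - Gk*Gl*(((lam:ℝ)-(κ:ℝ))*s + ((a:ℝ)-(b:ℝ))*p) ≤ 0 := by
    linarith [key]
  have hP : (0:ℝ) ≤ p^(2*κ+2*lam+2)*s^(2*a+2*b) := by positivity
  have h1 : p*s*(((↑κ*p^(κ-1)*s^a + p^κ*(↑a*s^(a-1)*(-1))) * (p^(lam+1)*s^b*Gl)
        + p^κ*s^a*(p^lam*s^b)) * (p^lam*s^b*(p^(κ+1)*s^a*Gk))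
      - (p^κ*s^a*(p^(lam+1)*s^b*Gl)) * ((↑lam*p^(lam-1)*s^b + p^lam*(↑b*s^(b-1)*(-1)))
          * (p^(κ+1)*s^a*Gk) + p^lam*s^b*(p^κ*s^a))) ≤ 0 := by
    rw [hbig]
    exact mul_nonpos_of_nonneg_of_nonpos hP hbr
  have hps0 : 0 < p*s := mul_pos hp hs
  have h2 := le_of_mul_le_mul_left (by rw [mul_zero]; linarith [h1] :
    (p*s)*(((↑κ*p^(κ-1)*s^a + p^κ*(↑a*s^(a-1)*(-1))) * (p^(lam+1)*s^b*Gl)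
        + p^κ*s^a*(p^lam*s^b)) * (p^lam*s^b*(p^(κ+1)*s^a*Gk))
      - (p^κ*s^a*(p^(lam+1)*s^b*Gl)) * ((↑lam*p^(lam-1)*s^b + p^lam*(↑b*s^(b-1)*(-1)))
          * (p^(κ+1)*s^a*Gk) + p^lam*s^b*(p^κ*s^a))) ≤ (p*s)*0) hps0
  linarith [h2]

noncomputable def koonB (k n : ℕ) : ℝ :=
  ∫ u in (0:ℝ)..1, u ^ (k - 1) * (1 - u) ^ (n - k)

noncomputable def koonRel (k n : ℕ) (p : ℝ) : ℝ :=
  (1 / koonB k n) * ∫ u in (0:ℝ)..p, u ^ (k - 1) * (1 - u) ^ (n - k)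

noncomputable def koonH (k n : ℕ) (p : ℝ) : ℝ :=
  p * (p ^ (k - 1) * (1 - p) ^ (n - k) / koonB k n) / koonRel k n p

theorem koonH_ratio_decreasing (k n l m : ℕ) (hk : 1 ≤ k) (hkn : k ≤ n)
    (hl : 1 ≤ l) (hlm : l ≤ m) (hkl : k ≤ l) (hml : m - l ≤ n - k) :
    AntitoneOn (fun p => koonH k n p / koonH l m p) (Set.Ioo (0 : ℝ) 1) := by
  set Fk : ℝ → ℝ := fun q => ∫ u in (0:ℝ)..q, u^(k-1)*(1-u)^(n-k) with hFkdef
  set Fl : ℝ → ℝ := fun q => ∫ u in (0:ℝ)..q, u^(l-1)*(1-u)^(m-l) with hFldef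
  set R : ℝ → ℝ := fun q => (q^(k-1)*(1-q)^(n-k) * Fl q) / (q^(l-1)*(1-q)^(m-l) * Fk q)
    with hRdef
  have hder : ∀ p ∈ Ioo (0:ℝ) 1, HasDerivAt R
      ((((↑(k-1)*p^(k-1-1)*(1-p)^(n-k) + p^(k-1)*(↑(n-k)*(1-p)^(n-k-1)*(-1))) * Fl p
          + p^(k-1)*(1-p)^(n-k)*(p^(l-1)*(1-p)^(m-l))) * (p^(l-1)*(1-p)^(m-l)*Fk p)
        - (p^(k-1)*(1-p)^(n-k)*Fl p) * ((↑(l-1)*p^(l-1-1)*(1-p)^(m-l)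
            + p^(l-1)*(↑(m-l)*(1-p)^(m-l-1)*(-1))) * Fk p
          + p^(l-1)*(1-p)^(m-l)*(p^(k-1)*(1-p)^(n-k))))
        / (p^(l-1)*(1-p)^(m-l)*Fk p)^2) p := by
    intro p hp
    have h1p : (0:ℝ) < 1 - p := by linarith [hp.2]
    have hfk : HasDerivAt (fun q : ℝ => q^(k-1)*(1-q)^(n-k))
        (↑(k-1)*p^(k-1-1)*(1-p)^(n-k) + p^(k-1)*(↑(n-k)*(1-p)^(n-k-1)*(-1))) p :=
      (hasDerivAt_pow (k-1) p).mul (((hasDerivAt_id p).const_sub 1).pow (n-k))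
    have hfl : HasDerivAt (fun q : ℝ => q^(l-1)*(1-q)^(m-l))
        (↑(l-1)*p^(l-1-1)*(1-p)^(m-l) + p^(l-1)*(↑(m-l)*(1-p)^(m-l-1)*(-1))) p :=
      (hasDerivAt_pow (l-1) p).mul (((hasDerivAt_id p).const_sub 1).pow (m-l))
    have hFk' : HasDerivAt Fk (p^(k-1)*(1-p)^(n-k)) p := F_deriv (k-1) (n-k) p
    have hFl' : HasDerivAt Fl (p^(l-1)*(1-p)^(m-l)) p := F_deriv (l-1) (m-l) p
    have hden : p^(l-1)*(1-p)^(m-l)*Fk p ≠ 0 := by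
      have h1 : 0 < Fk p := F_pos (k-1) (n-k) hp.1 hp.2.le
      exact ne_of_gt (mul_pos (mul_pos (pow_pos hp.1 _) (pow_pos h1p _)) h1)
    exact (hfk.mul hFl').div (hfl.mul hFk') hden
  have hanti : AntitoneOn R (Ioo (0:ℝ) 1) := by
    apply antitoneOn_of_deriv_nonpos (convex_Ioo 0 1)
    · intro p hp
      exact ((hder p hp).differentiableAt).continuousAt.continuousWithinAt
    · intro p hp
      rw [interior_Ioo] at hp
      exact ((hder p hp).differentiableAt).differentiableWithinAt
    · intro p hp
      rw [interior_Ioo] at hp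
      rw [(hder p hp).deriv]
      apply div_nonpos_of_nonpos_of_nonneg _ (sq_nonneg _)
      have h1p : (0:ℝ) < 1 - p := by linarith [hp.2]
      exact num_nonpos (k-1) (l-1) (n-k) (m-l) (by omega) hml hp.1 h1p (by ring)
        (F_eq_G (k-1) (n-k) hp.1 hp.2) (F_eq_G (l-1) (m-l) hp.1 hp.2)
  apply hanti.congr
  intro p hp
  have h1p : (0:ℝ) < 1 - p := by linarith [hp.2]
  have hB1 : 0 < koonB k n := by unfold koonB; exact F_pos (k-1) (n-k) one_pos le_rfl
  have hB2 : 0 < koonB l m := by unfold koonB; exact F_pos (l-1) (m-l) one_pos le_rfl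
  have hFkp : 0 < Fk p := F_pos (k-1) (n-k) hp.1 hp.2.le
  have hFlp : 0 < Fl p := F_pos (l-1) (m-l) hp.1 hp.2.le
  have hfk0 : (0:ℝ) < p^(k-1)*(1-p)^(n-k) := mul_pos (pow_pos hp.1 _) (pow_pos h1p _)
  have hfl0 : (0:ℝ) < p^(l-1)*(1-p)^(m-l) := mul_pos (pow_pos hp.1 _) (pow_pos h1p _)
  show R p = koonH k n p / koonH l m p
  rw [koonH, koonH, koonRel, koonRel, hRdef]
  have hFk' : (∫ u in (0:ℝ)..p, u^(k-1)*(1-u)^(n-k)) = Fk p := rfl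
  have hFl' : (∫ u in (0:ℝ)..p, u^(l-1)*(1-u)^(m-l)) = Fl p := rfl
  rw [hFk', hFl']
  have n1 : p ≠ 0 := ne_of_gt hp.1
  have n2 : (1:ℝ) - p ≠ 0 := ne_of_gt h1p
  have n3 : koonB k n ≠ 0 := ne_of_gt hB1
  have n4 : koonB l m ≠ 0 := ne_of_gt hB2
  have n5 : Fk p ≠ 0 := ne_of_gt hFkp
  have n6 : Fl p ≠ 0 := ne_of_gt hFlp
  have n7 : p^(k-1) ≠ 0 := pow_ne_zero _ n1
  have n8 : p^(l-1) ≠ 0 := pow_ne_zero _ n1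
  have n9 : ((1:ℝ)-p)^(n-k) ≠ 0 := pow_ne_zero _ n2
  have n10 : ((1:ℝ)-p)^(m-l) ≠ 0 := pow_ne_zero _ n2
  field_simp
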